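/- Let P₁,P₂,P₃,P₄ ∈ ℝ³ and r₁,r₂,r₃,r₄ ∈ ℝ. Suppose there exists z = (z₁,z₂,z₃) ∈ ℂ³ that is not real (i.e., at least one coordinate zⱼ has nonzero imaginary part) and satisfies the four complexified sphere equations Σⱼ₌₁³ (zⱼ − (Pᵢ)ⱼ)² = rᵢ² for i = 1,2,3,4. Then P₁,P₂,P₃,P₄ are coplanar. -/

import Mathlib

noncomputable section

/-- The Euclidean space ℝ³. -/
abbrev E3 := EuclideanSpace ℝ (Fin 3)

/-- `z ∈ ℂ³` lies on the complexified sphere with center `P ∈ ℝ³` and radius `r ∈ ℝ`: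
`Σⱼ (zⱼ − Pⱼ)² = r²` (sum of squares, no conjugation). -/
def OnComplexSphere (P : E3) (r : ℝ) (z : Fin 3 → ℂ) : Prop :=
  (z 0 - (P 0 : ℂ)) ^ 2 + (z 1 - (P 1 : ℂ)) ^ 2 + (z 2 - (P 2 : ℂ)) ^ 2 = (r : ℂ) ^ 2

/-- If four complexified spheres with real centers and radii share a common non-real
point of ℂ³, then their centers are coplanar. -/
theorem centers_coplanar_of_common_nonreal_point
    (P₁ P₂ P₃ P₄ : E3) (r₁ r₂ r₃ r₄ : ℝ)
    (z : Fin 3 → ℂ) (hz : ∃ j : Fin 3, (z j).im ≠ 0)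
    (h₁ : OnComplexSphere P₁ r₁ z) (h₂ : OnComplexSphere P₂ r₂ z)
    (h₃ : OnComplexSphere P₃ r₃ z) (h₄ : OnComplexSphere P₄ r₄ z) :
    Coplanar ℝ ({P₁, P₂, P₃, P₄} : Set E3) := by
  obtain ⟨j0, hj0⟩ := hz
  set y : Fin 3 → ℝ := fun j => (z j).im with hy
  set f : E3 →ₗ[ℝ] ℝ :=
    { toFun := fun w => y 0 * w 0 + y 1 * w 1 + y 2 * w 2
      map_add' := by intro a b; simp [PiLp.add_apply]; ring
      map_smul' := by intro c a; simp [PiLp.smul_apply, smul_eq_mul]; ring } with hfdef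
  have hfapp : ∀ w : E3, f w = y 0 * w 0 + y 1 * w 1 + y 2 * w 2 := fun w => rfl
  have key : ∀ (P : E3) (r : ℝ), OnComplexSphere P r z →
      ((z 0).re - P 0) * y 0 + ((z 1).re - P 1) * y 1 + ((z 2).re - P 2) * y 2 = 0 := by
    intro P r h
    have := congrArg Complex.im h
    simp [pow_two, Complex.add_im, Complex.mul_im, Complex.sub_im, Complex.sub_re, hy] at this
    linarith
  have k1 := key P₁ r₁ h₁
  have k2 := key P₂ r₂ h₂
  have k3 := key P₃ r₃ h₃
  have k4 := key P₄ r₄ h₄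
  have hconst : ∀ p ∈ ({P₁, P₂, P₃, P₄} : Set E3), f p = f P₁ := by
    intro p hp
    rcases hp with rfl | rfl | rfl | rfl
    · rfl
    all_goals rw [hfapp, hfapp]; linarith
  have hle : vectorSpan ℝ ({P₁, P₂, P₃, P₄} : Set E3) ≤ LinearMap.ker f := by
    rw [vectorSpan_def, Submodule.span_le]
    rintro v ⟨a, ha, b, hb, rfl⟩
    simp only [SetLike.mem_coe, LinearMap.mem_ker, vsub_eq_sub, map_sub]
    rw [hconst a ha, hconst b hb, sub_self]
  have hfy : f (WithLp.toLp 2 y : E3) ≠ 0 := by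
    rw [hfapp, WithLp.ofLp_toLp]
    intro h
    apply hj0
    have h0 : y 0 = 0 ∧ y 1 = 0 ∧ y 2 = 0 := by
      refine ⟨mul_self_eq_zero.1 ?_, mul_self_eq_zero.1 ?_, mul_self_eq_zero.1 ?_⟩ <;>
        linarith [mul_self_nonneg (y 0), mul_self_nonneg (y 1), mul_self_nonneg (y 2)]
    have : y j0 = 0 := by fin_cases j0 <;> simp [h0.1, h0.2.1, h0.2.2]
    exact this
  have hrk : Module.finrank ℝ (LinearMap.range f) + Module.finrank ℝ (LinearMap.ker f) = 3 := by
    rw [f.finrank_range_add_finrank_ker]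
    simp [finrank_euclideanSpace_fin]
  have hpos : 0 < Module.finrank ℝ (LinearMap.range f) := by
    rw [Module.finrank_pos_iff]
    refine Submodule.nontrivial_iff_ne_bot.2 (fun h => hfy ?_)
    have : f (WithLp.toLp 2 y : E3) ∈ LinearMap.range f := ⟨(WithLp.toLp 2 y : E3), rfl⟩
    rw [h] at this
    simpa using this
  have hker2 : Module.finrank ℝ (LinearMap.ker f) ≤ 2 := by omega
  unfold Coplanar
  calc Module.rank ℝ (vectorSpan ℝ ({P₁, P₂, P₃, P₄} : Set E3))
      ≤ Module.rank ℝ (LinearMap.ker f) := Submodule.rank_mono hle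
    _ = Module.finrank ℝ (LinearMap.ker f) := (Module.finrank_eq_rank ℝ _).symm
    _ ≤ 2 := by exact_mod_cast Nat.cast_le.2 hker2
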